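/- For all positive integers n, m, every even integer r ≥ 2, and every unit vector x ∈ ℝⁿ (‖x‖₂ = 1), the feature hashing matrix A satisfies ‖X(x)‖_r^r ≤ ‖x‖_∞^{2r} · ∑_{β=1}^{r/2} ∑_{α=2β}^{r} ( m^β / (‖x‖_∞² m)^α ) · ∑_{V ⊆ [n], |V| = α} |𝒮_{V,β}| · ∏_{q ∈ V} x_q². -/

import Mathlib

open scoped BigOperators Classical
noncomputable section

namespace FH

def hashSq (n m : ℕ) (h : Fin n → Fin m) (σ : Fin n → Bool) (x : Fin n → ℝ) : ℝ :=
  ∑ i : Fin m, (∑ j : Fin n, (if h j = i then (if σ j then (1:ℝ) else -1) * x j else 0)) ^ 2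

def hashE (n m : ℕ) (f : (Fin n → Fin m) → (Fin n → Bool) → ℝ) : ℝ :=
  (∑ p : (Fin n → Fin m) × (Fin n → Bool), f p.1 p.2) /
    (Fintype.card ((Fin n → Fin m) × (Fin n → Bool)) : ℝ)

def l2 (n : ℕ) (x : Fin n → ℝ) : ℝ := Real.sqrt (∑ j, x j ^ 2)

def linf (n : ℕ) (x : Fin n → ℝ) : ℝ := ⨆ j, |x j|

/-- `‖X(x)‖_r^r = E[ |‖Ax‖₂² − 1|^r ]`. -/
def Xmom (n m r : ℕ) (x : Fin n → ℝ) : ℝ :=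
  hashE n m (fun h σ => |hashSq n m h σ x - 1| ^ r)

/-- Degree of `q` in the multigraph `G_S` given by the sequence `S` of ordered pairs. -/
def dS (n r : ℕ) (S : Fin r → Fin n × Fin n) (q : Fin n) : ℕ :=
  (Finset.univ.filter (fun p : Fin r => q = (S p).1 ∨ q = (S p).2)).card

/-- `V(S)`: the set of vertices incident to some edge of `G_S` (equivalently, lying in a
connected component of `G_S` with at least two vertices, as all edges join distinct vertices). -/
def VS (n r : ℕ) (S : Fin r → Fin n × Fin n) : Finset (Fin n) :=
  Finset.univ.filter (fun q : Fin n => ∃ p, q = (S p).1 ∨ q = (S p).2)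

/-- The simple graph underlying the multigraph `G_S`. -/
def graphS (n r : ℕ) (S : Fin r → Fin n × Fin n) : SimpleGraph (Fin n) where
  Adj v w := v ≠ w ∧ ∃ p, S p = (v, w) ∨ S p = (w, v)
  symm := by
    constructor
    rintro v w ⟨hvw, p, hp⟩
    exact ⟨hvw.symm, p, hp.symm⟩
  loopless := by constructor; rintro v ⟨h, -⟩; exact h rfl

/-- `α(S) = |V(S)|`. -/
def alphaS (n r : ℕ) (S : Fin r → Fin n × Fin n) : ℕ := (VS n r S).card

/-- `β(S)`: the number of connected components of `G_S` containing at least two vertices. -/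
def betaS (n r : ℕ) (S : Fin r → Fin n × Fin n) : ℕ :=
  ((graphS n r S).connectedComponentMk '' (VS n r S : Set (Fin n))).ncard

/-- `𝒮_{V,β}`: sequences of `r` ordered pairs of distinct indices with all degrees even,
`V(S) = V` and `β(S) = β`. -/
def Sfam (n r : ℕ) (V : Finset (Fin n)) (β : ℕ) : Set (Fin r → Fin n × Fin n) :=
  {S | (∀ p, (S p).1 ≠ (S p).2) ∧ (∀ q, Even (dS n r S q)) ∧ VS n r S = V ∧ betaS n r S = β}

/-! ### Auxiliary definitions and lemmas -/

def sg (b : Bool) : ℝ := if b then 1 else -1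

def Good (n m r : ℕ) (S : Fin r → Fin n × Fin n) : Finset (Fin n → Fin m) :=
  Finset.univ.filter (fun h => ∀ p, h (S p).1 = h (S p).2)

lemma sg_mul_self (b : Bool) : sg b * sg b = 1 := by cases b <;> simp [sg]

lemma prod_endpoints {n r : ℕ} (f : Fin n → ℝ) (S : Fin r → Fin n × Fin n)
    (hS : ∀ p, (S p).1 ≠ (S p).2) :
    ∏ p : Fin r, f (S p).1 * f (S p).2 = ∏ q : Fin n, f q ^ dS n r S q := by
  have step1 : ∀ p : Fin r, f (S p).1 * f (S p).2
      = ∏ q : Fin n, (if q = (S p).1 ∨ q = (S p).2 then f q else 1) := by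
    intro p
    rw [← Finset.prod_filter]
    have h2 : Finset.univ.filter (fun q : Fin n => q = (S p).1 ∨ q = (S p).2)
        = {(S p).1, (S p).2} := by
      ext q; simp [Finset.mem_insert]
    rw [h2, Finset.prod_insert (by simp [hS p]), Finset.prod_singleton]
  calc ∏ p, f (S p).1 * f (S p).2
      = ∏ p, ∏ q, (if q = (S p).1 ∨ q = (S p).2 then f q else 1) :=
        Finset.prod_congr rfl fun p _ => step1 p
    _ = ∏ q, ∏ p, (if q = (S p).1 ∨ q = (S p).2 then f q else 1) := Finset.prod_comm
    _ = ∏ q, f q ^ dS n r S q := by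
        refine Finset.prod_congr rfl fun q _ => ?_
        rw [dS, ← Finset.prod_filter, Finset.prod_const]

lemma sigma_sum {n : ℕ} (d : Fin n → ℕ) :
    (∑ σ : Fin n → Bool, ∏ q : Fin n, sg (σ q) ^ d q)
      = if (∀ q, Even (d q)) then (2:ℝ)^n else 0 := by
  have key := Finset.prod_univ_sum (fun _ : Fin n => (Finset.univ : Finset Bool))
    (fun q b => sg b ^ d q)
  rw [Fintype.piFinset_univ] at key
  rw [← key]
  have hb : ∀ q : Fin n, (∑ b : Bool, sg b ^ d q) = if Even (d q) then (2:ℝ) else 0 := by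
    intro q
    rw [Fintype.sum_bool]
    rcases Nat.even_or_odd (d q) with h | h
    · simp [sg, h.neg_one_pow, if_pos h]; norm_num
    · simp [sg, h.neg_one_pow, if_neg (Nat.not_even_iff_odd.mpr h)]
  by_cases hall : ∀ q, Even (d q)
  · rw [if_pos hall]
    calc ∏ q : Fin n, (∑ b : Bool, sg b ^ d q) = ∏ _q : Fin n, (2:ℝ) := by
          refine Finset.prod_congr rfl fun q _ => ?_
          rw [hb q, if_pos (hall q)]
      _ = 2^n := by simp
  · rw [if_neg hall]
    push_neg at hall
    obtain ⟨q, hq⟩ := hall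
    exact Finset.prod_eq_zero (Finset.mem_univ q) (by rw [hb q, if_neg hq])

lemma h_sum {n m r : ℕ} (S : Fin r → Fin n × Fin n) :
    (∑ h : Fin n → Fin m, ∏ p : Fin r, (if h (S p).1 = h (S p).2 then (1:ℝ) else 0))
    = ((Good n m r S).card : ℝ) := by
  have : ∀ h : Fin n → Fin m,
      (∏ p : Fin r, (if h (S p).1 = h (S p).2 then (1:ℝ) else 0))
      = if (∀ p, h (S p).1 = h (S p).2) then (1:ℝ) else 0 := by
    intro h
    rw [Finset.prod_boole]
    simp
  simp only [this]
  rw [Finset.sum_boole]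
  rfl

lemma good_const {n m r : ℕ} {S : Fin r → Fin n × Fin n} {h : Fin n → Fin m}
    (hh : ∀ p, h (S p).1 = h (S p).2) {a b : Fin n}
    (hab : (graphS n r S).connectedComponentMk a = (graphS n r S).connectedComponentMk b) :
    h a = h b := by
  rw [SimpleGraph.ConnectedComponent.eq] at hab
  obtain ⟨w⟩ := hab
  induction w with
  | nil => rfl
  | @cons u v w hadj _ ih =>
    obtain ⟨-, p, hp | hp⟩ := hadj
    · have := hh p; rw [hp] at this; exact this.trans ih
    · have := hh p; rw [hp] at this; exact this.symm.trans ih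

lemma betaS_eq {n r : ℕ} (S : Fin r → Fin n × Fin n) :
    betaS n r S = ((VS n r S).image (graphS n r S).connectedComponentMk).card := by
  rw [betaS, ← Finset.coe_image, Set.ncard_coe_finset]

lemma good_card_le {n m r : ℕ} (hn : 0 < n) (S : Fin r → Fin n × Fin n) :
    (Good n m r S).card ≤ m ^ (n - alphaS n r S + betaS n r S) := by
  classical
  set G := graphS n r S with hG
  set cm := G.connectedComponentMk with hcm
  set V := VS n r S with hV
  set comps : Finset G.ConnectedComponent := V.image cm with hcomps
  set rep : G.ConnectedComponent → Fin n :=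
    fun C => if h : ∃ q ∈ V, cm q = C then h.choose else ⟨0, hn⟩ with hrep
  have hrep_spec : ∀ C ∈ comps, rep C ∈ V ∧ cm (rep C) = C := by
    intro C hC
    rw [hcomps, Finset.mem_image] at hC
    obtain ⟨q, hq, hcq⟩ := hC
    have hex : ∃ q ∈ V, cm q = C := ⟨q, hq, hcq⟩
    simp only [hrep, dif_pos hex]
    exact ⟨hex.choose_spec.1, hex.choose_spec.2⟩
  set s : Finset (Fin n) := (Finset.univ \ V) ∪ comps.image rep with hs
  have hscard : s.card = (n - alphaS n r S) + betaS n r S := by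
    rw [hs, Finset.card_union_of_disjoint]
    · congr 1
      · rw [Finset.card_sdiff_of_subset (Finset.subset_univ V), Finset.card_univ, Fintype.card_fin]
        rfl
      · rw [betaS_eq]
        exact Finset.card_image_of_injOn (fun C hC C' hC' hrr => by
          rw [← (hrep_spec C hC).2, ← (hrep_spec C' hC').2, hrr])
    · rw [Finset.disjoint_right]
      intro a ha
      rw [Finset.mem_image] at ha
      obtain ⟨C, hC, hCa⟩ := ha
      have := (hrep_spec C hC).1
      rw [hCa] at this
      simp [this]
  have hinj : (Good n m r S).card ≤ Fintype.card ({q // q ∈ s} → Fin m) := by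
    apply Finset.card_le_card_of_injOn (fun h => fun q : {q // q ∈ s} => h q.1)
      (fun _ _ => Finset.mem_univ _)
    intro h₁ h₁m h₂ h₂m heq
    rw [Good, Finset.mem_coe, Finset.mem_filter] at h₁m h₂m
    funext q
    by_cases hqV : q ∈ V
    · have hC : cm q ∈ comps := Finset.mem_image_of_mem cm hqV
      have hrs : rep (cm q) ∈ s := by
        rw [hs]; exact Finset.mem_union_right _ (Finset.mem_image_of_mem rep hC)
      have h1 : h₁ q = h₁ (rep (cm q)) :=
        good_const h₁m.2 ((hrep_spec _ hC).2.symm ▸ rfl : cm q = cm (rep (cm q)))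
      have h2 : h₂ q = h₂ (rep (cm q)) :=
        good_const h₂m.2 ((hrep_spec _ hC).2.symm ▸ rfl : cm q = cm (rep (cm q)))
      have := congrFun heq ⟨rep (cm q), hrs⟩
      simp only at this
      rw [h1, h2, this]
    · have hqs : q ∈ s := by
        rw [hs]; exact Finset.mem_union_left _ (by simp [hqV])
      have := congrFun heq ⟨q, hqs⟩
      simpa using this
  rw [Fintype.card_fun, Fintype.card_fin, Fintype.card_coe, hscard] at hinj
  exact hinj

lemma mem_VS {n r : ℕ} {S : Fin r → Fin n × Fin n} {q : Fin n} :
    q ∈ VS n r S ↔ ∃ p, q = (S p).1 ∨ q = (S p).2 := by simp [VS]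

lemma dS_zero_of_not_mem {n r : ℕ} {S : Fin r → Fin n × Fin n} {q : Fin n}
    (hq : q ∉ VS n r S) : dS n r S q = 0 := by
  rw [mem_VS] at hq; push_neg at hq
  rw [dS, Finset.card_eq_zero, Finset.filter_eq_empty_iff]
  intro p _
  push_neg
  exact hq p

lemma dS_pos_of_mem {n r : ℕ} {S : Fin r → Fin n × Fin n} {q : Fin n}
    (hq : q ∈ VS n r S) : 0 < dS n r S q := by
  rw [mem_VS] at hq
  obtain ⟨p, hp⟩ := hq
  rw [dS, Finset.card_pos]
  exact ⟨p, Finset.mem_filter.mpr ⟨Finset.mem_univ _, hp⟩⟩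

lemma sum_dS {n r : ℕ} (S : Fin r → Fin n × Fin n) (hS : ∀ p, (S p).1 ≠ (S p).2) :
    ∑ q : Fin n, dS n r S q = 2 * r := by
  have h1 : ∀ q : Fin n, dS n r S q
      = ∑ p : Fin r, if q = (S p).1 ∨ q = (S p).2 then 1 else 0 := by
    intro q
    rw [dS, Finset.card_eq_sum_ones, Finset.sum_filter]
  simp only [h1]
  rw [Finset.sum_comm]
  have h2 : ∀ p : Fin r, (∑ q : Fin n, if q = (S p).1 ∨ q = (S p).2 then 1 else 0) = 2 := by
    intro p
    rw [Finset.sum_boole]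
    have h3 : Finset.univ.filter (fun q : Fin n => q = (S p).1 ∨ q = (S p).2)
        = {(S p).1, (S p).2} := by ext q; simp
    rw [h3, Finset.card_pair (hS p)]
    simp
  simp only [h2]
  simp [Finset.sum_const, mul_comm]

lemma sum_dS_V {n r : ℕ} (S : Fin r → Fin n × Fin n) (hS : ∀ p, (S p).1 ≠ (S p).2) :
    ∑ q ∈ VS n r S, dS n r S q = 2 * r := by
  rw [← sum_dS S hS]
  exact Finset.sum_subset (Finset.subset_univ _)
    (fun q _ hq => dS_zero_of_not_mem hq)

lemma two_le_dS {n r : ℕ} {S : Fin r → Fin n × Fin n} {q : Fin n}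
    (he : Even (dS n r S q)) (hq : q ∈ VS n r S) : 2 ≤ dS n r S q := by
  rcases he with ⟨k, hk⟩
  have := dS_pos_of_mem hq
  omega

lemma alpha_le_r {n r : ℕ} (S : Fin r → Fin n × Fin n) (hS : ∀ p, (S p).1 ≠ (S p).2)
    (he : ∀ q, Even (dS n r S q)) : alphaS n r S ≤ r := by
  have h1 : (VS n r S).card • 2 ≤ ∑ q ∈ VS n r S, dS n r S q :=
    Finset.card_nsmul_le_sum _ _ _ (fun q hq => two_le_dS (he q) hq)
  rw [sum_dS_V S hS] at h1
  simp only [smul_eq_mul] at h1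
  rw [alphaS]; omega

lemma one_le_beta {n r : ℕ} (S : Fin r → Fin n × Fin n) (hr : 0 < r) :
    1 ≤ betaS n r S := by
  rw [betaS_eq, Nat.one_le_iff_ne_zero, ← Nat.pos_iff_ne_zero, Finset.card_pos]
  have : (S ⟨0, hr⟩).1 ∈ VS n r S := mem_VS.mpr ⟨⟨0, hr⟩, Or.inl rfl⟩
  exact ⟨_, Finset.mem_image_of_mem _ this⟩

lemma two_beta_le_alpha {n r : ℕ} (S : Fin r → Fin n × Fin n)
    (hS : ∀ p, (S p).1 ≠ (S p).2) : 2 * betaS n r S ≤ alphaS n r S := by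
  rw [betaS_eq, alphaS]
  apply Finset.mul_card_image_le_card_of_maps_to (fun a ha => Finset.mem_image_of_mem _ ha)
  intro C hC
  rw [Finset.mem_image] at hC
  obtain ⟨q, hq, hcq⟩ := hC
  obtain ⟨p, hp⟩ := mem_VS.mp hq
  set q' : Fin n := if q = (S p).1 then (S p).2 else (S p).1 with hq'
  have hqq' : q ≠ q' := by
    by_cases h2 : q = (S p).1
    · rw [hq', if_pos h2, h2]; exact hS p
    · rw [hq', if_neg h2]; exact h2
  have hadj : (graphS n r S).Adj q q' := by
    refine ⟨hqq', p, ?_⟩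
    by_cases h2 : q = (S p).1
    · left; rw [hq', if_pos h2, h2]
    · have h3 : q = (S p).2 := by rcases hp with h | h; exacts [absurd h h2, h]
      right; rw [hq', if_neg h2, h3]
  have hq'V : q' ∈ VS n r S := by
    rw [mem_VS]
    refine ⟨p, ?_⟩
    rw [hq']
    by_cases h2 : q = (S p).1
    · right; rw [if_pos h2]
    · left; rw [if_neg h2]
  have hcq' : (graphS n r S).connectedComponentMk q' = C := by
    rw [← hcq]
    exact (SimpleGraph.ConnectedComponent.eq.mpr hadj.reachable).symm
  have hsub : ({q, q'} : Finset (Fin n)) ⊆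
      (VS n r S).filter (fun a => (graphS n r S).connectedComponentMk a = C) := by
    intro a ha
    rw [Finset.mem_insert, Finset.mem_singleton] at ha
    rcases ha with rfl | rfl
    · exact Finset.mem_filter.mpr ⟨hq, hcq⟩
    · exact Finset.mem_filter.mpr ⟨hq'V, hcq'⟩
  calc 2 = ({q, q'} : Finset (Fin n)).card := (Finset.card_pair hqq').symm
    _ ≤ _ := Finset.card_le_card hsub

lemma beta_le_half {n r : ℕ} (S : Fin r → Fin n × Fin n)
    (hS : ∀ p, (S p).1 ≠ (S p).2) (he : ∀ q, Even (dS n r S q)) :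
    betaS n r S ≤ r / 2 := by
  have h1 := two_beta_le_alpha S hS
  have h2 := alpha_le_r S hS he
  omega

lemma alpha_le_n {n r : ℕ} (S : Fin r → Fin n × Fin n) : alphaS n r S ≤ n := by
  rw [alphaS]
  calc (VS n r S).card ≤ (Finset.univ : Finset (Fin n)).card :=
        Finset.card_le_card (Finset.subset_univ _)
    _ = n := by simp

lemma beta_le_alpha {n r : ℕ} (S : Fin r → Fin n × Fin n) : betaS n r S ≤ alphaS n r S := by
  rw [betaS_eq, alphaS]
  exact Finset.card_image_le

lemma hashSq_expand {n m : ℕ} (h : Fin n → Fin m) (σ : Fin n → Bool) (x : Fin n → ℝ) :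
    hashSq n m h σ x = ∑ j : Fin n, ∑ l : Fin n,
      (x j * x l) * (sg (σ j) * sg (σ l)) * (if h j = h l then (1:ℝ) else 0) := by
  have e1 : ∀ i : Fin m,
      (∑ j : Fin n, (if h j = i then (if σ j then (1:ℝ) else -1) * x j else 0)) ^ 2
      = ∑ j : Fin n, ∑ l : Fin n,
          (if h j = i then (if h l = i then (sg (σ j) * x j) * (sg (σ l) * x l)
            else 0) else 0) := by
    intro i
    rw [sq, Finset.sum_mul_sum]
    refine Finset.sum_congr rfl fun j _ => Finset.sum_congr rfl fun l _ => ?_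
    simp only [sg]
    split_ifs <;> ring
  rw [hashSq]
  simp only [e1]
  rw [Finset.sum_comm]
  refine Finset.sum_congr rfl fun j _ => ?_
  rw [Finset.sum_comm]
  refine Finset.sum_congr rfl fun l _ => ?_
  rw [Finset.sum_ite_eq (Finset.univ : Finset (Fin m)) (h j)
    (fun i => if h l = i then (sg (σ j) * x j) * (sg (σ l) * x l) else 0)]
  simp only [Finset.mem_univ, if_true]
  by_cases hjl : h j = h l
  · rw [if_pos hjl.symm, if_pos hjl]; ring
  · rw [if_neg (fun hc => hjl hc.symm), if_neg hjl, mul_zero]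

lemma hashSq_sub_one {n m : ℕ} (h : Fin n → Fin m) (σ : Fin n → Bool) (x : Fin n → ℝ)
    (hx : ∑ j, x j ^ 2 = 1) :
    hashSq n m h σ x - 1 = ∑ p ∈ (Finset.univ : Finset (Fin n)).offDiag,
      (x p.1 * x p.2) * (sg (σ p.1) * sg (σ p.2)) * (if h p.1 = h p.2 then (1:ℝ) else 0) := by
  have e0 : hashSq n m h σ x = ∑ p ∈ Finset.univ ×ˢ Finset.univ,
      (x p.1 * x p.2) * (sg (σ p.1) * sg (σ p.2)) *
        (if h p.1 = h p.2 then (1:ℝ) else 0) := by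
    rw [hashSq_expand, Finset.sum_product]
  have e1 : (Finset.univ ×ˢ Finset.univ : Finset (Fin n × Fin n))
      = Finset.univ := by simp
  have e2 : ((Finset.univ : Finset (Fin n)).offDiag)
      = Finset.univ.filter (fun p : Fin n × Fin n => p.1 ≠ p.2) := by
    ext p; simp [Finset.mem_offDiag]
  rw [e0, e1, e2, ← Finset.sum_filter_add_sum_filter_not Finset.univ
    (fun p : Fin n × Fin n => p.1 ≠ p.2)]
  have e3 : ∑ p ∈ Finset.univ.filter (fun p : Fin n × Fin n => ¬ p.1 ≠ p.2),
      (x p.1 * x p.2) * (sg (σ p.1) * sg (σ p.2)) *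
        (if h p.1 = h p.2 then (1:ℝ) else 0) = 1 := by
    have e4 : Finset.univ.filter (fun p : Fin n × Fin n => ¬ p.1 ≠ p.2)
        = Finset.univ.image (fun j : Fin n => (j, j)) := by
      ext p
      rw [Finset.mem_filter, Finset.mem_image]
      simp only [Finset.mem_univ, true_and, not_not]
      constructor
      · intro hp; exact ⟨p.1, Prod.ext_iff.mpr ⟨rfl, hp⟩⟩
      · rintro ⟨j, rfl⟩; rfl
    calc ∑ p ∈ Finset.univ.filter (fun p : Fin n × Fin n => ¬ p.1 ≠ p.2),
        (x p.1 * x p.2) * (sg (σ p.1) * sg (σ p.2)) *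
          (if h p.1 = h p.2 then (1:ℝ) else 0)
        = ∑ j : Fin n, x j ^ 2 := by
          rw [e4, Finset.sum_image (by intro a _ b _ hab; simpa using hab)]
          refine Finset.sum_congr rfl fun j _ => ?_
          split_ifs with hc
          · rw [sg_mul_self]; ring
          · simp at hc
      _ = 1 := hx
  rw [e3]
  ring

lemma sum_hsigma {n m r : ℕ} (x : Fin n → ℝ) (S : Fin r → Fin n × Fin n)
    (hS : ∀ p, (S p).1 ≠ (S p).2) :
    (∑ hh : (Fin n → Fin m) × (Fin n → Bool), ∏ i : Fin r,
      ((x (S i).1 * x (S i).2) * (sg (hh.2 (S i).1) * sg (hh.2 (S i).2)) *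
        (if hh.1 (S i).1 = hh.1 (S i).2 then (1:ℝ) else 0)))
    = (∏ q, x q ^ dS n r S q) * (if (∀ q, Even (dS n r S q)) then (2:ℝ)^n else 0)
        * ((Good n m r S).card : ℝ) := by
  rw [Fintype.sum_prod_type]
  have key : ∀ (h : Fin n → Fin m) (σ : Fin n → Bool),
      (∏ i : Fin r, ((x (S i).1 * x (S i).2) * (sg (σ (S i).1) * sg (σ (S i).2)) *
        (if h (S i).1 = h (S i).2 then (1:ℝ) else 0)))
      = (∏ q, x q ^ dS n r S q) * (∏ q, sg (σ q) ^ dS n r S q) *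
          (∏ i : Fin r, (if h (S i).1 = h (S i).2 then (1:ℝ) else 0)) := by
    intro h σ
    rw [Finset.prod_mul_distrib, Finset.prod_mul_distrib,
      prod_endpoints x S hS, prod_endpoints (fun q => sg (σ q)) S hS]
  simp only [key]
  have swap : ∀ h : Fin n → Fin m,
      (∑ σ : Fin n → Bool, (∏ q, x q ^ dS n r S q) * (∏ q, sg (σ q) ^ dS n r S q) *
        (∏ i : Fin r, (if h (S i).1 = h (S i).2 then (1:ℝ) else 0)))
      = (∏ q, x q ^ dS n r S q) * (if (∀ q, Even (dS n r S q)) then (2:ℝ)^n else 0)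
          * (∏ i : Fin r, (if h (S i).1 = h (S i).2 then (1:ℝ) else 0)) := by
    intro h
    rw [← sigma_sum (dS n r S)]
    rw [← Finset.sum_mul, ← Finset.mul_sum]
  simp only [swap]
  rw [← Finset.mul_sum, h_sum]

lemma abs_le_linf {n : ℕ} (x : Fin n → ℝ) (j : Fin n) : |x j| ≤ linf n x := by
  unfold linf
  exact le_ciSup (f := fun j => |x j|) (Set.Finite.bddAbove (Set.finite_range _)) j

lemma linf_nonneg {n : ℕ} (hn : 0 < n) (x : Fin n → ℝ) : 0 ≤ linf n x :=
  le_trans (abs_nonneg _) (abs_le_linf x ⟨0, hn⟩)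

lemma linf_pos {n : ℕ} (hn : 0 < n) (x : Fin n → ℝ) (hx : ∑ j, x j ^ 2 = 1) :
    0 < linf n x := by
  have hne : ∃ j, x j ≠ 0 := by
    by_contra hc
    push_neg at hc
    rw [Finset.sum_eq_zero (fun j _ => by rw [hc j]; ring)] at hx
    norm_num at hx
  obtain ⟨j, hj⟩ := hne
  exact lt_of_lt_of_le (abs_pos.mpr hj) (abs_le_linf x j)

lemma xprod_nonneg {n r : ℕ} (x : Fin n → ℝ) (S : Fin r → Fin n × Fin n)
    (he : ∀ q, Even (dS n r S q)) : 0 ≤ ∏ q, x q ^ dS n r S q :=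
  Finset.prod_nonneg fun q _ => (he q).pow_nonneg _

lemma xprod_le {n r : ℕ} (hn : 0 < n) (x : Fin n → ℝ) (S : Fin r → Fin n × Fin n)
    (hS : ∀ p, (S p).1 ≠ (S p).2) (he : ∀ q, Even (dS n r S q)) :
    ∏ q, x q ^ dS n r S q ≤
      linf n x ^ (2*r - 2*alphaS n r S) * ∏ q ∈ VS n r S, x q ^ 2 := by
  set L := linf n x with hL
  have hL0 : 0 ≤ L := linf_nonneg hn x
  have e1 : ∏ q, x q ^ dS n r S q = ∏ q ∈ VS n r S, x q ^ dS n r S q := by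
    refine (Finset.prod_subset (Finset.subset_univ _) ?_).symm
    intro q _ hq
    rw [dS_zero_of_not_mem hq, pow_zero]
  rw [e1]
  have e2 : ∏ q ∈ VS n r S, x q ^ dS n r S q ≤
      ∏ q ∈ VS n r S, (L ^ (dS n r S q - 2) * x q ^ 2) := by
    refine Finset.prod_le_prod (fun q _ => (he q).pow_nonneg _) (fun q hq => ?_)
    have h2 : 2 ≤ dS n r S q := two_le_dS (he q) hq
    have heq : x q ^ dS n r S q = x q ^ (dS n r S q - 2) * x q ^ 2 := by
      rw [← pow_add]; congr 1; omega
    rw [heq]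
    apply mul_le_mul_of_nonneg_right _ (sq_nonneg _)
    have hev : Even (dS n r S q - 2) := by
      rcases he q with ⟨k, hk⟩; exact ⟨k - 1, by omega⟩
    calc x q ^ (dS n r S q - 2) = |x q| ^ (dS n r S q - 2) := (hev.pow_abs _).symm
      _ ≤ L ^ (dS n r S q - 2) := pow_le_pow_left₀ (abs_nonneg _) (abs_le_linf x q) _
  refine e2.trans (le_of_eq ?_)
  rw [Finset.prod_mul_distrib, Finset.prod_pow_eq_pow_sum]
  congr 2
  have h1 : ∑ q ∈ VS n r S, (dS n r S q - 2 + 2) = ∑ q ∈ VS n r S, dS n r S q :=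
    Finset.sum_congr rfl fun q hq => by have := two_le_dS (he q) hq; omega
  rw [Finset.sum_add_distrib, Finset.sum_const, smul_eq_mul] at h1
  rw [sum_dS_V S hS] at h1
  have h2 : alphaS n r S = (VS n r S).card := rfl
  omega

theorem moment_sum_upper :
    ∀ n m r : ℕ, 0 < n → 0 < m → Even r → 2 ≤ r →
      ∀ x : Fin n → ℝ, l2 n x = 1 →
        Xmom n m r x ≤ linf n x ^ (2*r) *
          ∑ β ∈ Finset.Icc 1 (r/2), ∑ α ∈ Finset.Icc (2*β) r,
            (m:ℝ)^β / (linf n x ^ 2 * m)^α *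
              ∑ V ∈ Finset.powersetCard α (Finset.univ : Finset (Fin n)),
                ((Sfam n r V β).ncard : ℝ) * ∏ q ∈ V, x q ^ 2 := by
  intro n m r hn hm hrEven hr2 x hx
  have hs0 : (0:ℝ) ≤ ∑ j, x j ^ 2 := Finset.sum_nonneg fun j _ => sq_nonneg _
  have hx2 : ∑ j, x j ^ 2 = 1 := by
    have h1 : Real.sqrt (∑ j, x j ^ 2) = 1 := hx
    nlinarith [Real.sq_sqrt hs0]
  set L := linf n x with hLdef
  have hL : 0 < L := linf_pos hn x hx2
  have hm0 : (0:ℝ) < (m:ℝ) := by exact_mod_cast hm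
  -- the index set of sequences
  set T : Finset (Fin r → Fin n × Fin n) :=
    Fintype.piFinset (fun _ : Fin r => (Finset.univ : Finset (Fin n)).offDiag) with hT
  have hTmem : ∀ S, S ∈ T ↔ ∀ p, (S p).1 ≠ (S p).2 := by
    intro S
    rw [hT, Fintype.mem_piFinset]
    constructor
    · intro h p; exact (Finset.mem_offDiag.mp (h p)).2.2
    · intro h p; exact Finset.mem_offDiag.mpr ⟨Finset.mem_univ _, Finset.mem_univ _, h p⟩
  -- the bound function
  set g : (Fin r → Fin n × Fin n) → ℝ := fun S =>
    L ^ (2*r - 2*alphaS n r S) * ((m:ℝ)^(betaS n r S) / (m:ℝ)^(alphaS n r S)) *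
      ∏ q ∈ VS n r S, x q ^ 2 with hg
  have hg_nonneg : ∀ S, 0 ≤ g S := by
    intro S
    apply mul_nonneg (mul_nonneg (pow_nonneg hL.le _)
      (div_nonneg (pow_nonneg hm0.le _) (pow_nonneg hm0.le _)))
    exact Finset.prod_nonneg fun q _ => sq_nonneg _
  -- Step 1: expand Xmom
  have hD : (Fintype.card ((Fin n → Fin m) × (Fin n → Bool)) : ℝ) = (m:ℝ)^n * 2^n := by
    rw [Fintype.card_prod, Fintype.card_fun, Fintype.card_fun]
    push_cast
    simp
  have step1 : Xmom n m r x = ∑ S ∈ T,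
      ((∏ q, x q ^ dS n r S q) * (if (∀ q, Even (dS n r S q)) then (2:ℝ)^n else 0)
        * ((Good n m r S).card : ℝ)) / ((m:ℝ)^n * 2^n) := by
    rw [Xmom, hashE]
    rw [hD]
    rw [← Finset.sum_div]
    congr 1
    have expand : ∀ hh : (Fin n → Fin m) × (Fin n → Bool),
        |hashSq n m hh.1 hh.2 x - 1| ^ r
        = ∑ S ∈ T, ∏ i : Fin r,
            ((x (S i).1 * x (S i).2) * (sg (hh.2 (S i).1) * sg (hh.2 (S i).2)) *
              (if hh.1 (S i).1 = hh.1 (S i).2 then (1:ℝ) else 0)) := by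
      intro hh
      rw [hrEven.pow_abs, hashSq_sub_one hh.1 hh.2 x hx2]
      have hpow : (∑ p ∈ (Finset.univ : Finset (Fin n)).offDiag,
          (x p.1 * x p.2) * (sg (hh.2 p.1) * sg (hh.2 p.2)) *
            (if hh.1 p.1 = hh.1 p.2 then (1:ℝ) else 0)) ^ r
          = ∏ _i : Fin r, (∑ p ∈ (Finset.univ : Finset (Fin n)).offDiag,
            (x p.1 * x p.2) * (sg (hh.2 p.1) * sg (hh.2 p.2)) *
              (if hh.1 p.1 = hh.1 p.2 then (1:ℝ) else 0)) := by
        rw [Finset.prod_const, Finset.card_univ, Fintype.card_fin]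
      rw [hpow, Finset.prod_univ_sum]
    calc (∑ hh : (Fin n → Fin m) × (Fin n → Bool), |hashSq n m hh.1 hh.2 x - 1| ^ r)
        = ∑ hh : (Fin n → Fin m) × (Fin n → Bool), ∑ S ∈ T, ∏ i : Fin r,
            ((x (S i).1 * x (S i).2) * (sg (hh.2 (S i).1) * sg (hh.2 (S i).2)) *
              (if hh.1 (S i).1 = hh.1 (S i).2 then (1:ℝ) else 0)) :=
          Finset.sum_congr rfl fun hh _ => expand hh
      _ = ∑ S ∈ T, ∑ hh : (Fin n → Fin m) × (Fin n → Bool), ∏ i : Fin r,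
            ((x (S i).1 * x (S i).2) * (sg (hh.2 (S i).1) * sg (hh.2 (S i).2)) *
              (if hh.1 (S i).1 = hh.1 (S i).2 then (1:ℝ) else 0)) := Finset.sum_comm
      _ = _ := Finset.sum_congr rfl fun S hS =>
          sum_hsigma x S ((hTmem S).mp hS)
  -- Step 2: bound each term
  have step2 : ∀ S ∈ T,
      ((∏ q, x q ^ dS n r S q) * (if (∀ q, Even (dS n r S q)) then (2:ℝ)^n else 0)
        * ((Good n m r S).card : ℝ)) / ((m:ℝ)^n * 2^n)
      ≤ if (∀ q, Even (dS n r S q)) then g S else 0 := by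
    intro S hST
    have hSd : ∀ p, (S p).1 ≠ (S p).2 := (hTmem S).mp hST
    by_cases he : ∀ q, Even (dS n r S q)
    · rw [if_pos he, if_pos he]
      have hterm : ((∏ q, x q ^ dS n r S q) * (2:ℝ)^n * ((Good n m r S).card : ℝ))
          / ((m:ℝ)^n * 2^n)
          = (∏ q, x q ^ dS n r S q) * (((Good n m r S).card : ℝ) / (m:ℝ)^n) := by
        field_simp
      rw [hterm]
      have hb1 : (∏ q, x q ^ dS n r S q) ≤
          L ^ (2*r - 2*alphaS n r S) * ∏ q ∈ VS n r S, x q ^ 2 :=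
        xprod_le hn x S hSd he
      have hb2 : ((Good n m r S).card : ℝ) / (m:ℝ)^n ≤
          (m:ℝ)^(betaS n r S) / (m:ℝ)^(alphaS n r S) := by
        rw [div_le_div_iff₀ (pow_pos hm0 n) (pow_pos hm0 (alphaS n r S))]
        have hc : ((Good n m r S).card : ℝ) ≤ (m:ℝ)^(n - alphaS n r S + betaS n r S) := by
          exact_mod_cast good_card_le hn S
        calc ((Good n m r S).card : ℝ) * (m:ℝ)^(alphaS n r S)
            ≤ (m:ℝ)^(n - alphaS n r S + betaS n r S) * (m:ℝ)^(alphaS n r S) :=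
              mul_le_mul_of_nonneg_right hc (pow_nonneg hm0.le _)
          _ = (m:ℝ)^(n - alphaS n r S + betaS n r S + alphaS n r S) := by rw [← pow_add]
          _ = (m:ℝ)^(betaS n r S + n) := by
              congr 1
              have := alpha_le_n (n := n) (r := r) S
              omega
          _ = (m:ℝ)^(betaS n r S) * (m:ℝ)^n := by rw [pow_add]
      calc (∏ q, x q ^ dS n r S q) * (((Good n m r S).card : ℝ) / (m:ℝ)^n)
          ≤ (L ^ (2*r - 2*alphaS n r S) * ∏ q ∈ VS n r S, x q ^ 2) *
            ((m:ℝ)^(betaS n r S) / (m:ℝ)^(alphaS n r S)) := by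
            apply mul_le_mul hb1 hb2
              (div_nonneg (Nat.cast_nonneg _) (pow_nonneg hm0.le _))
              (mul_nonneg (pow_nonneg hL.le _)
                (Finset.prod_nonneg fun q _ => sq_nonneg _))
        _ = g S := by rw [hg]; ring
    · rw [if_neg he, if_neg he]
      simp
  -- Step 3: sum over the even-degree sequences
  set T' : Finset (Fin r → Fin n × Fin n) :=
    T.filter (fun S => ∀ q, Even (dS n r S q)) with hT'
  have step3 : Xmom n m r x ≤ ∑ S ∈ T', g S := by
    rw [step1]
    calc ∑ S ∈ T, ((∏ q, x q ^ dS n r S q) *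
          (if (∀ q, Even (dS n r S q)) then (2:ℝ)^n else 0)
          * ((Good n m r S).card : ℝ)) / ((m:ℝ)^n * 2^n)
        ≤ ∑ S ∈ T, (if (∀ q, Even (dS n r S q)) then g S else 0) :=
          Finset.sum_le_sum step2
      _ = ∑ S ∈ T', g S := by rw [hT', Finset.sum_filter]
  -- Step 4: rewrite the RHS as a quadruple sum
  have hSfamFin : ∀ (V : Finset (Fin n)) (β : ℕ),
      ((Sfam n r V β).ncard : ℝ) = ((Sfam n r V β).toFinset.card : ℝ) := by
    intro V β
    rw [Set.ncard_eq_toFinset_card']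
  have step4 : L ^ (2*r) *
      (∑ β ∈ Finset.Icc 1 (r/2), ∑ α ∈ Finset.Icc (2*β) r,
        (m:ℝ)^β / (L ^ 2 * m)^α *
          ∑ V ∈ Finset.powersetCard α (Finset.univ : Finset (Fin n)),
            ((Sfam n r V β).ncard : ℝ) * ∏ q ∈ V, x q ^ 2)
      = ∑ β ∈ Finset.Icc 1 (r/2), ∑ α ∈ Finset.Icc (2*β) r,
          ∑ V ∈ Finset.powersetCard α (Finset.univ : Finset (Fin n)),
            ∑ S ∈ (Sfam n r V β).toFinset, g S := by
    rw [Finset.mul_sum]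
    refine Finset.sum_congr rfl fun β hβ => ?_
    rw [Finset.mul_sum]
    refine Finset.sum_congr rfl fun α hα => ?_
    rw [Finset.mul_sum, Finset.mul_sum]
    refine Finset.sum_congr rfl fun V hV => ?_
    have hVcard : V.card = α := (Finset.mem_powersetCard.mp hV).2
    have hαr : α ≤ r := (Finset.mem_Icc.mp hα).2
    have hgconst : ∀ S ∈ (Sfam n r V β).toFinset,
        g S = L ^ (2*r - 2*α) * ((m:ℝ)^β / (m:ℝ)^α) * ∏ q ∈ V, x q ^ 2 := by
      intro S hS
      rw [Set.mem_toFinset] at hS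
      obtain ⟨hd, he, hV', hβ'⟩ := hS
      have hα' : alphaS n r S = α := by rw [alphaS, hV', hVcard]
      simp only [hg]
      rw [hα', hβ', hV']
    rw [Finset.sum_congr rfl hgconst, Finset.sum_const, hSfamFin]
    have hL2m : (L ^ 2 * (m:ℝ))^α = L^(2*α) * (m:ℝ)^α := by
      rw [mul_pow, ← pow_mul]
    have hLsplit : L ^ (2*r) = L ^ (2*r - 2*α) * L ^ (2*α) := by
      rw [← pow_add]
      congr 1
      omega
    rw [nsmul_eq_mul, hL2m, hLsplit]
    have hLa : (0:ℝ) < L ^ (2*α) := pow_pos hL _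
    have hma : (0:ℝ) < (m:ℝ)^α := pow_pos hm0 _
    field_simp
  -- Step 5: compare the sums
  rw [step4]
  refine step3.trans ?_
  -- sigma-type packaging
  set B : Finset (Σ _ : ℕ, Σ _ : ℕ, Σ _ : Finset (Fin n), (Fin r → Fin n × Fin n)) :=
    (Finset.Icc 1 (r/2)).sigma (fun β => (Finset.Icc (2*β) r).sigma
      (fun α => (Finset.powersetCard α (Finset.univ : Finset (Fin n))).sigma
        (fun V => (Sfam n r V β).toFinset))) with hB
  have hBsum : ∑ t ∈ B, g t.2.2.2
      = ∑ β ∈ Finset.Icc 1 (r/2), ∑ α ∈ Finset.Icc (2*β) r,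
          ∑ V ∈ Finset.powersetCard α (Finset.univ : Finset (Fin n)),
            ∑ S ∈ (Sfam n r V β).toFinset, g S := by
    rw [hB, Finset.sum_sigma]
    refine Finset.sum_congr rfl fun β _ => ?_
    rw [Finset.sum_sigma]
    refine Finset.sum_congr rfl fun α _ => ?_
    rw [Finset.sum_sigma]
  rw [← hBsum]
  set e : (Fin r → Fin n × Fin n) →
      (Σ _ : ℕ, Σ _ : ℕ, Σ _ : Finset (Fin n), (Fin r → Fin n × Fin n)) :=
    fun S => ⟨betaS n r S, alphaS n r S, VS n r S, S⟩ with he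
  have himg : ∑ S ∈ T', g S = ∑ t ∈ T'.image e, g t.2.2.2 := by
    rw [Finset.sum_image]
    intro a _ b _ hab
    exact congrArg (fun t => t.2.2.2) hab
  rw [himg]
  apply Finset.sum_le_sum_of_subset_of_nonneg
  · intro t ht
    rw [Finset.mem_image] at ht
    obtain ⟨S, hS, rfl⟩ := ht
    rw [hT', Finset.mem_filter] at hS
    obtain ⟨hST, heven⟩ := hS
    have hSd : ∀ p, (S p).1 ≠ (S p).2 := (hTmem S).mp hST
    rw [hB, Finset.mem_sigma]
    refine ⟨?_, ?_⟩
    · rw [Finset.mem_Icc]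
      exact ⟨one_le_beta S (by omega), beta_le_half S hSd heven⟩
    rw [Finset.mem_sigma]
    refine ⟨?_, ?_⟩
    · rw [Finset.mem_Icc]
      exact ⟨two_beta_le_alpha S hSd, alpha_le_r S hSd heven⟩
    rw [Finset.mem_sigma]
    refine ⟨?_, ?_⟩
    · exact Finset.mem_powersetCard.mpr ⟨Finset.subset_univ _, rfl⟩
    · rw [Set.mem_toFinset]
      exact ⟨hSd, heven, rfl, rfl⟩
  · intro t _ _
    exact hg_nonneg _

end FH
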